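/- The range (column space) of the partial transpose ρ₆₆^{T_B} equals the 6-dimensional subspace of ℂ⁹ consisting of all vectors V = (V₀,…,V₈) satisfying V₄ = −V₀, V₆ = V₅ − V₂ and V₇ = V₃; equivalently, all vectors of the form (A, B, C, D, −A, E, E−C, D, F) with A, B, C, D, E, F ∈ ℂ. -/

import Mathlib

open Matrix ComplexOrder

noncomputable def N66 : Matrix (Fin 9) (Fin 9) ℂ :=
  !![1, 0, 0, 0, 0, 0, 0, 0, -1;
     0, 2, 0, -1, 0, 0, 0, 0, 0;
     0, 0, 1, 0, 0, 0, 1, 0, 0;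
     0, -1, 0, 1, 0, 0, 0, 0, 1;
     0, 0, 0, 0, 1, 0, 1, 0, 0;
     0, 0, 0, 0, 0, 1, 0, -1, 0;
     0, 0, 1, 0, 1, 0, 2, 0, 0;
     0, 0, 0, 0, 0, -1, 0, 1, 0;
     -1, 0, 0, 1, 0, 0, 0, 0, 3]

/-- The index map `(i, j) ↦ 3 i + j` from `Fin 3 × Fin 3` to `Fin 9`. -/
def idx (p : Fin 3 × Fin 3) : Fin 9 :=
  ⟨3 * p.1.val + p.2.val, by have h1 := p.1.isLt; have h2 := p.2.isLt; omega⟩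

/-- The state `ρ₆₆`, viewed as an operator on `ℂ³ ⊗ ℂ³`. -/
noncomputable def rho66 : Matrix (Fin 3 × Fin 3) (Fin 3 × Fin 3) ℂ :=
  fun p q => (1 / 13 : ℂ) * N66 (idx p) (idx q)

/-- The partial transpose on the second factor: `(ρ^{T_B})_{(i,j),(k,l)} = ρ_{(i,l),(k,j)}`. -/
noncomputable def ptrans (ρ : Matrix (Fin 3 × Fin 3) (Fin 3 × Fin 3) ℂ) :
    Matrix (Fin 3 × Fin 3) (Fin 3 × Fin 3) ℂ :=
  fun p q => ρ (p.1, q.2) (q.1, p.2)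

lemma fin3_mk_two (h : (2:ℕ) < 3) : (⟨2, h⟩ : Fin 3) = 2 := rfl

lemma key (x : Fin 3 × Fin 3 → ℂ) (p : Fin 3 × Fin 3) :
    (ptrans rho66).mulVecLin x p = (1/13 : ℂ) *
      ![x (0,0) - x (1,1) + x (2,2), 2 * x (0,1), x (0,2) - x (2,0),
        x (1,0) + x (2,1), -x (0,0) + x (1,1) - x (2,2), x (1,2) + x (2,0),
        -x (0,2) + x (1,2) + 2 * x (2,0), x (1,0) + x (2,1),
        x (0,0) - x (1,1) + 3 * x (2,2)] (idx p) := by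
  fin_cases p <;>
  · simp only [mulVecLin_apply, mulVec, dotProduct, ptrans, rho66, idx, N66,
      Fintype.sum_prod_type, Fin.sum_univ_three]
    norm_num [Matrix.of_apply, Matrix.cons_val', Matrix.cons_val_zero,
      Matrix.cons_val_one, Matrix.head_cons, Matrix.head_fin_const,
      Matrix.cons_val_fin_one, Fin.isValue]
    try ring

/-- The range of `ρ₆₆^{T_B}` consists exactly of the vectors
`(A, B, C, D, -A, E, E-C, D, F)`, i.e. those `V` with
`V₄ = -V₀`, `V₆ = V₅ - V₂` and `V₇ = V₃`. -/
theorem rho66_ptrans_range :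
    ∀ V : Fin 3 × Fin 3 → ℂ,
      V ∈ LinearMap.range (ptrans rho66).mulVecLin ↔
        (V (1, 1) = -V (0, 0) ∧ V (2, 0) = V (1, 2) - V (0, 2) ∧
          V (2, 1) = V (1, 0)) := by
  intro V
  constructor
  · rintro ⟨x, rfl⟩
    refine ⟨?_, ?_, ?_⟩ <;>
    · simp only [key, idx]
      norm_num [Matrix.cons_val', Matrix.cons_val_zero, Matrix.cons_val_one,
        Matrix.head_cons, Matrix.head_fin_const]
      try ring
  · rintro ⟨h4, h6, h7⟩
    refine ⟨fun p =>
      (!![13 * (3 * V (0,0) - V (2,2)) / 2, 13 * V (0,1) / 2, 13 * V (0,2);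
          13 * V (1,0), 0, 13 * V (1,2);
          0, 0, 13 * (V (2,2) - V (0,0)) / 2] : Matrix (Fin 3) (Fin 3) ℂ)
        p.1 p.2, ?_⟩
    funext p
    rw [key]
    fin_cases p <;>
      norm_num [idx, fin3_mk_two, Matrix.cons_val', Matrix.cons_val_zero,
        Matrix.cons_val_one, Matrix.cons_val_two, Matrix.head_cons, Matrix.head_fin_const,
        Matrix.vecHead, Matrix.vecTail, Function.comp, Prod.mk_zero_zero,
        Prod.mk_one_one, h4, h6, h7] <;>
      try first
        | ring1
        | (simp only [← Prod.mk_zero_zero, ← Prod.mk_one_one]; rw [h4]; try ring)
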